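/- Let H be a group and K a subgroup of H. A group homomorphism χ: K → ℂˣ extends to a group homomorphism H → ℂˣ if and only if the restriction of χ to K ∩ [H,H] is trivial, where [H,H] denotes the commutator subgroup of H. -/

import Mathlib

noncomputable instance : RootableBy ℂˣ ℕ := by
    refine rootableByOfPowLeftSurj ℂˣ ℕ ?_
    intro n hn z
    refine ⟨Units.mk0 (Complex.exp (Complex.log z / n)) (Complex.exp_ne_zero _), ?_⟩
    ext
    simp only [Units.val_pow_eq_pow_val, Units.val_mk0]
    rw [← Complex.exp_nat_mul, mul_div_cancel₀ _ (by exact_mod_cast hn), Complex.exp_log z.ne_zero]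

noncomputable instance : RootableBy ℂˣ ℤ := Group.rootableByIntOfRootableByNat ℂˣ

noncomputable instance (A : Type*) [Group A] [RootableBy A ℤ] : DivisibleBy (Additive A) ℤ where
  div a n := Additive.ofMul (RootableBy.root a.toMul n)
  div_zero a := congrArg Additive.ofMul (RootableBy.root_zero a.toMul)
  div_cancel a hn := congrArg Additive.ofMul (RootableBy.root_cancel a.toMul hn)

universe u

/-- Divisibility of `ℂˣ` lets us extend characters along injections of commutative groups. -/
lemma extend_char {G₁ G₂ : Type u} [CommGroup G₁] [CommGroup G₂] (ι : G₁ →* G₂)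
    (hι : Function.Injective ι) (φ : G₁ →* ℂˣ) :
    ∃ φ' : G₂ →* ℂˣ, ∀ x, φ' (ι x) = φ x := by
  let e : ULift.{u} ℂˣ ≃* ℂˣ := MulEquiv.ulift
  let J : AddCommGrpCat.{u} := AddCommGrpCat.of (Additive (ULift.{u} ℂˣ))
  let f : AddCommGrpCat.of (Additive G₁) ⟶ AddCommGrpCat.of (Additive G₂) :=
    AddCommGrpCat.ofHom (MonoidHom.toAdditive ι)
  have : CategoryTheory.Mono f := (AddCommGrpCat.mono_iff_injective f).mpr hι
  let g : AddCommGrpCat.of (Additive G₁) ⟶ J :=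
    AddCommGrpCat.ofHom (MonoidHom.toAdditive (e.symm.toMonoidHom.comp φ))
  have hJ : CategoryTheory.Injective J := AddCommGrpCat.injective_of_divisible _
  let h := CategoryTheory.Injective.factorThru g f
  have hh := CategoryTheory.Injective.comp_factorThru g f
  let h' : Additive G₂ →+ Additive (ULift.{u} ℂˣ) := h.hom
  refine ⟨e.toMonoidHom.comp (MonoidHom.toAdditive.symm h'), fun x ↦ ?_⟩
  have h2 : h (f (Additive.ofMul x)) = g (Additive.ofMul x) := by
    rw [← hh]; rfl
  show e ((MonoidHom.toAdditive.symm h') (ι x)) = φ x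
  have h3 : (MonoidHom.toAdditive.symm h') (ι x) = Additive.toMul (h (f (Additive.ofMul x))) := rfl
  rw [h3, h2]
  exact e.apply_symm_apply _

/-- A character of a subgroup `K` of a group `H` extends to `H` if and only if it is
trivial on `K ∩ [H,H]`. -/
theorem stmt_0 {H : Type*} [Group H] (K : Subgroup H) (χ : K →* ℂˣ) :
    (∃ χ' : H →* ℂˣ, ∀ k : K, χ' (k : H) = χ k) ↔
      ∀ k : K, (k : H) ∈ commutator H → χ k = 1 := by
  constructor
  · rintro ⟨χ', hχ'⟩ k hk
    rw [← hχ' k]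
    have : commutator H ≤ χ'.ker := by
      rw [commutator_eq_closure]
      refine Subgroup.closure_le _ |>.2 ?_
      rintro - ⟨a, b, rfl⟩
      simp [MonoidHom.mem_ker, commutatorElement_def, mul_comm]
    exact this hk
  · intro htriv
    -- map to the abelianization
    let f : K →* Abelianization H := (Abelianization.of).comp K.subtype
    have hker : ∀ k : K, f k = 1 ↔ (k : H) ∈ commutator H := fun k ↦
      QuotientGroup.eq_one_iff _
    have hker' : f.ker ≤ χ.ker := fun k hk ↦ htriv k ((hker k).1 hk)
    -- χ factors through K ⧸ ker f ≃ range f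
    let χ₁ : K ⧸ f.ker →* ℂˣ := QuotientGroup.lift f.ker χ hker'
    let e := QuotientGroup.quotientKerEquivRange f
    let χ₂ : f.range →* ℂˣ := χ₁.comp e.symm.toMonoidHom
    obtain ⟨φ', hφ'⟩ := extend_char f.range.subtype (Subgroup.subtype_injective _) χ₂
    refine ⟨φ'.comp Abelianization.of, fun k ↦ ?_⟩
    have h1 : f.range.subtype (e (QuotientGroup.mk k)) = f k := rfl
    calc φ' (Abelianization.of (k : H)) = φ' (f.range.subtype (e (QuotientGroup.mk k))) := by
          rw [h1]; rfl
      _ = χ₂ (e (QuotientGroup.mk k)) := hφ' _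
      _ = χ₁ (QuotientGroup.mk k) := by simp [χ₂]
      _ = χ k := rfl
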